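/- (Contraction estimates on iterates of a one-dimensional parabolic map, Lemma 4.3.) Let R be analytic in a neighbourhood of the origin of the form R(x) = x − ax^N + O(|x|^{N+1}) with a > 0 and N ≥ 2 an integer. For 0 < η < a define ℛ_η : [0,∞) → ℝ by ℛ_η(s) = s/[1 + (a−η)(N−1)s^{N−1}]^{α} with α = 1/(N−1). Then for any 0 < η < a there exist β, ρ > 0 such that R maps the sector S(β,ρ) into itself and, for every x ∈ S(β,ρ) and every integer k ≥ 0, its k-th iterate satisfies |R^k(x)| ≤ ℛ_η^k(|x|) = |x|/[1 + k(a−η)(N−1)|x|^{N−1}]^{α}. -/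

import Mathlib

open Complex Filter

noncomputable section

lemma aux_bern {α t : ℝ} (hα0 : 0 < α) (hα1 : α ≤ 1) (ht : 0 ≤ t) :
    1 - α * t ≤ (1 + t) ^ (-α) := by
  have h1t : (0:ℝ) < 1 + t := by linarith
  rcases le_or_gt (1 - α * t) 0 with h | h
  · exact h.trans (Real.rpow_pos_of_pos h1t _).le
  · set p := 1 / α with hp
    have hp1 : 1 ≤ p := by
      rw [hp, le_div_iff₀ hα0]; simpa using hα1
    have hαt : 0 ≤ α * t := by positivity
    have h3 : (0:ℝ) < 1 + α * t := by linarith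
    have h5 : 1 + t ≤ (1 + α * t) ^ p := by
      have hb := one_add_mul_self_le_rpow_one_add (by linarith : (-1:ℝ) ≤ α * t) hp1
      have hpt : p * (α * t) = t := by
        rw [hp]; field_simp
      linarith [hb, hpt ▸ hb]
    have h6 : (1 + t) ^ α ≤ 1 + α * t := by
      have h7 := Real.rpow_le_rpow h1t.le h5 hα0.le
      rwa [← Real.rpow_mul h3.le, mul_comm p α, hp, mul_one_div, div_self hα0.ne',
        Real.rpow_one] at h7
    have h8 : 1 - α * t ≤ (1 + α * t)⁻¹ := by
      rw [inv_eq_one_div, le_div_iff₀ h3]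
      nlinarith [sq_nonneg (α * t)]
    have h9 : ((1 + α * t) : ℝ)⁻¹ ≤ ((1 + t) ^ α)⁻¹ := by
      apply inv_anti₀ (Real.rpow_pos_of_pos h1t _) h6
    rw [Real.rpow_neg h1t.le]
    exact h8.trans h9

lemma aux_pow {m : ℕ} {s D : ℝ} (hm : 1 ≤ m) (hs : 0 ≤ s) (hD : 0 < D) :
    (s / D ^ ((1:ℝ)/(m:ℝ))) ^ m = s ^ m / D := by
  have hm0 : (m:ℝ) ≠ 0 := Nat.cast_ne_zero.mpr (by omega)
  rw [div_pow, ← Real.rpow_natCast (D ^ ((1:ℝ)/(m:ℝ))) m, ← Real.rpow_mul hD.le,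
    one_div_mul_cancel hm0, Real.rpow_one]

lemma aux_mono {m : ℕ} {c s t : ℝ} (hm : 1 ≤ m) (hc : 0 ≤ c) (hs : 0 ≤ s) (hst : s ≤ t) :
    s / (1 + c * s ^ m) ^ ((1:ℝ)/(m:ℝ)) ≤ t / (1 + c * t ^ m) ^ ((1:ℝ)/(m:ℝ)) := by
  have ht : 0 ≤ t := hs.trans hst
  have hds : (0:ℝ) < 1 + c * s ^ m := by positivity
  have hdt : (0:ℝ) < 1 + c * t ^ m := by positivity
  have hnum : s ^ m ≤ t ^ m := pow_le_pow_left₀ hs hst m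
  apply le_of_pow_le_pow_left₀ (by omega : m ≠ 0) (by positivity)
  rw [aux_pow hm hs hds, aux_pow hm ht hdt, div_le_div_iff₀ hds hdt]
  nlinarith [mul_nonneg hc (pow_nonneg hs m), mul_nonneg hc (pow_nonneg ht m)]

lemma aux_step {m : ℕ} {c s : ℝ} (hm : 1 ≤ m) (hc : 0 < c) (hs : 0 < s) (k : ℕ) :
    (s / (1 + (k:ℝ) * c * s ^ m) ^ ((1:ℝ)/(m:ℝ))) /
      (1 + c * (s / (1 + (k:ℝ) * c * s ^ m) ^ ((1:ℝ)/(m:ℝ))) ^ m) ^ ((1:ℝ)/(m:ℝ))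
      = s / (1 + ((k:ℝ) + 1) * c * s ^ m) ^ ((1:ℝ)/(m:ℝ)) := by
  have hu0 : 0 < s ^ m := pow_pos hs m
  have hDk : (0:ℝ) < 1 + (k:ℝ) * c * s ^ m := by positivity
  have hDk1 : (0:ℝ) < 1 + ((k:ℝ) + 1) * c * s ^ m := by nlinarith
  rw [aux_pow hm hs.le hDk]
  have key : 1 + c * (s ^ m / (1 + (k:ℝ) * c * s ^ m))
      = (1 + ((k:ℝ) + 1) * c * s ^ m) / (1 + (k:ℝ) * c * s ^ m) := by
    field_simp; ring
  rw [key, Real.div_rpow hDk1.le hDk.le]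
  have h1 : (0:ℝ) < (1 + (k:ℝ) * c * s ^ m) ^ ((1:ℝ)/(m:ℝ)) := Real.rpow_pos_of_pos hDk _
  have h2 : (0:ℝ) < (1 + ((k:ℝ) + 1) * c * s ^ m) ^ ((1:ℝ)/(m:ℝ)) := Real.rpow_pos_of_pos hDk1 _
  field_simp


section
open Real
set_option maxHeartbeats 2000000

def Sector (β ρ : ℝ) : Set ℂ :=
  {z : ℂ | 0 < ‖z‖ ∧ ‖z‖ < ρ ∧ |Complex.arg z| < β / 2}

/-- **Contraction estimates on the iterates of a one-dimensional parabolic map**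
(Lemma 4.3 of Baldomá–Fontich–Martín). If `R(x) = x - a x^N + O(|x|^{N+1})` is
analytic near the origin with `a > 0`, then for every `0 < η < a` there are
`β, ρ > 0` such that `R` maps the sector `S(β,ρ)` into itself and
`|R^k(x)| ≤ |x| / (1 + k (a-η)(N-1) |x|^{N-1})^{1/(N-1)}` for all `x ∈ S(β,ρ)`
and all `k ≥ 0`. -/
theorem sector_iterates_parabolic_map (N : ℕ) (hN : 2 ≤ N) (a : ℝ) (ha : 0 < a)
    (ρ₀ : ℝ) (hρ₀ : 0 < ρ₀) (R : ℂ → ℂ)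
    (hRan : AnalyticOnNhd ℂ R (Metric.ball 0 ρ₀))
    (hR : ∃ C : ℝ, ∀ x ∈ Metric.ball (0 : ℂ) ρ₀,
      ‖R x - (x - (a : ℂ) * x ^ N)‖ ≤ C * ‖x‖ ^ (N + 1)) :
    ∀ η : ℝ, 0 < η → η < a →
      ∃ β ρ : ℝ, 0 < β ∧ 0 < ρ ∧ ρ ≤ ρ₀ ∧
        Set.MapsTo R (Sector β ρ) (Sector β ρ) ∧
        ∀ x ∈ Sector β ρ, ∀ k : ℕ,
          ‖R^[k] x‖ ≤
            ‖x‖ /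
              (1 + (k : ℝ) * (a - η) * ((N : ℝ) - 1) * ‖x‖ ^ (N - 1)) ^
                ((1 : ℝ) / ((N : ℝ) - 1)) := by
  intro η hη0 hηa
  obtain ⟨C₀, hC₀⟩ := hR
  set C : ℝ := |C₀| + 1 with hCdef
  have hC0 : 0 < C := by have := abs_nonneg C₀; linarith
  clear_value C
  have hCb : ∀ x ∈ Metric.ball (0 : ℂ) ρ₀,
      ‖R x - (x - (a:ℂ) * x ^ N)‖ ≤ C * ‖x‖ ^ (N + 1) := by
    intro x hx
    have h1 := hC₀ x hx
    refine h1.trans ?_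
    have h2 : C₀ ≤ C := by have := le_abs_self C₀; linarith
    exact mul_le_mul_of_nonneg_right h2 (by positivity)
  set m := N - 1 with hmdef
  have hm1 : 1 ≤ m := by omega
  have hmN : m + 1 = N := by omega
  have hmR : ((m:ℕ):ℝ) = (N:ℝ) - 1 := by
    have h1 : ((m + 1 : ℕ) : ℝ) = (N:ℝ) := by exact_mod_cast congrArg (fun n : ℕ => (n:ℝ)) hmN
    push_cast at h1
    linarith
  have hm0 : (0:ℝ) < (m:ℝ) := by exact_mod_cast Nat.pos_of_ne_zero (by omega)
  have hm1' : (1:ℝ) ≤ (m:ℝ) := by exact_mod_cast hm1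
  clear_value m
  have hπ := Real.pi_pos
  -- choose β
  set β : ℝ := min (π / (2 * m)) (Real.sqrt (η / (2 * a)) / m) with hβdef
  have hsq0 : 0 < Real.sqrt (η / (2 * a)) := Real.sqrt_pos.mpr (by positivity)
  have hβ0 : 0 < β := lt_min (by positivity) (by positivity)
  have hβ1 : (m:ℝ) * β ≤ π / 2 := by
    have h := min_le_left (π / (2 * m)) (Real.sqrt (η / (2 * a)) / m)
    rw [← hβdef] at h
    rw [le_div_iff₀ (by positivity : (0:ℝ) < 2 * m)] at h
    linarith
  have hβ2 : (m:ℝ) * β ≤ Real.sqrt (η / (2 * a)) := by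
    have h := min_le_right (π / (2 * m)) (Real.sqrt (η / (2 * a)) / m)
    rw [← hβdef] at h
    rw [le_div_iff₀ hm0] at h
    linarith
  have hβπ2 : β ≤ π / 2 := by linarith [le_mul_of_one_le_left hβ0.le hm1']
  have hcosβ : 1 - η / (4 * a) ≤ Real.cos ((m:ℝ) * β / 2) := by
    have h1 : ((m:ℝ) * β / 2) ^ 2 ≤ η / (2 * a) := by
      calc ((m:ℝ) * β / 2) ^ 2 ≤ Real.sqrt (η / (2 * a)) ^ 2 := by
            apply sq_le_sq'
            · linarith [mul_nonneg hm0.le hβ0.le, hsq0]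
            · linarith [mul_nonneg hm0.le hβ0.le]
        _ = η / (2 * a) := Real.sq_sqrt (by positivity)
    have h3 := Real.one_sub_sq_div_two_le_cos (x := (m:ℝ) * β / 2)
    have h4 : η / (2 * a) / 2 = η / (4 * a) := by ring
    linarith
  clear_value β
  -- choose ρ
  have hsinβ : 0 < Real.sin ((m:ℝ) * β / 4) := by
    apply Real.sin_pos_of_pos_of_lt_pi (by positivity)
    linarith
  set ρ : ℝ := min ρ₀ (min 1 (min (1 / (4 * a)) (min (η / (2 * C))
      (min (a * Real.sin ((m:ℝ) * β / 4) / C) (β / (64 * a)))))) with hρdef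
  have hρ0 : 0 < ρ := by
    refine lt_min hρ₀ (lt_min one_pos (lt_min (by positivity)
      (lt_min (by positivity) (lt_min (by positivity) (by positivity)))))
  have hρρ₀ : ρ ≤ ρ₀ := min_le_left _ _
  have hρ1 : ρ ≤ 1 := le_trans (min_le_right _ _) (min_le_left _ _)
  have hρa : 4 * a * ρ ≤ 1 := by
    have h : ρ ≤ 1 / (4 * a) :=
      le_trans (min_le_right _ _) (le_trans (min_le_right _ _) (min_le_left _ _))
    rw [le_div_iff₀ (by positivity)] at h
    ring_nf at h ⊢
    linarith
  have hρC : C * ρ ≤ η / 2 := by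
    have h : ρ ≤ η / (2 * C) :=
      le_trans (min_le_right _ _) (le_trans (min_le_right _ _)
        (le_trans (min_le_right _ _) (min_le_left _ _)))
    rw [le_div_iff₀ (by positivity)] at h
    ring_nf at h ⊢
    linarith
  have hρsin : C * ρ ≤ a * Real.sin ((m:ℝ) * β / 4) := by
    have h : ρ ≤ a * Real.sin ((m:ℝ) * β / 4) / C :=
      le_trans (min_le_right _ _) (le_trans (min_le_right _ _)
        (le_trans (min_le_right _ _) (le_trans (min_le_right _ _) (min_le_left _ _))))
    rw [le_div_iff₀ hC0] at h
    ring_nf at h ⊢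
    linarith
  have hρβ : 64 * a * ρ ≤ β := by
    have h : ρ ≤ β / (64 * a) :=
      le_trans (min_le_right _ _) (le_trans (min_le_right _ _)
        (le_trans (min_le_right _ _) (le_trans (min_le_right _ _) (min_le_right _ _))))
    rw [le_div_iff₀ (by positivity)] at h
    ring_nf at h ⊢
    linarith
  clear_value ρ
  -- single-step estimates
  have key : ∀ x ∈ Sector β ρ, R x ∈ Sector β ρ ∧
      ‖R x‖ ≤ ‖x‖ * (1 - (a - η) * ‖x‖ ^ m) := by
    intro x hx
    obtain ⟨hx0, hxρ, hxarg⟩ := hx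
    have hxne : x ≠ 0 := by
      intro h; rw [h] at hx0; simp at hx0
    set s := ‖x‖ with hsdef
    set u := s ^ m with hudef
    have hs0 : 0 < s := hx0
    have hu0 : 0 < u := pow_pos hs0 m
    have hsρ : s < ρ := hxρ
    have hus : u ≤ s := by
      calc u = s ^ m := hudef
        _ ≤ s ^ 1 := pow_le_pow_of_le_one hs0.le (by linarith) hm1
        _ = s := pow_one s
    clear_value s u
    clear hRan hC₀ hρdef hβdef hCdef hmdef
    have huρ : u < ρ := lt_of_le_of_lt hus hsρ
    have hau : a * u ≤ 1 / 4 := by linarith [mul_le_mul_of_nonneg_left huρ.le ha.le]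
    have hCs : C * s ≤ η / 2 := by linarith [mul_le_mul_of_nonneg_left hsρ.le hC0.le]
    have hCsa : C * s ≤ a := by linarith
    have hball : x ∈ Metric.ball (0:ℂ) ρ₀ := by
      rw [Metric.mem_ball, dist_zero_right, ← hsdef]
      linarith
    have hpow : s ^ (N + 1) = u * s * s := by
      rw [hudef, ← hmN]; ring
    set E : ℂ := (R x - (x - (a:ℂ) * x ^ N)) / x with hEdef
    have hE : ‖E‖ ≤ C * s * u := by
      rw [hEdef, norm_div, ← hsdef, div_le_iff₀ hs0]
      calc ‖R x - (x - (a:ℂ) * x ^ N)‖ ≤ C * s ^ (N + 1) := by rw [hsdef]; exact hCb x hball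
        _ = C * s * u * s := by rw [hpow]; ring
    clear hCb hball
    set w : ℂ := 1 - (a:ℂ) * x ^ m + E with hwdef
    have hxE : x * E = R x - (x - (a:ℂ) * x ^ N) := by
      rw [hEdef]; field_simp
    have hxm1 : x * ((a:ℂ) * x ^ m) = (a:ℂ) * x ^ N := by
      rw [← hmN, pow_succ]; ring
    have hxw : R x = x * w := by
      rw [hwdef, mul_add, mul_sub, mul_one, hxm1, hxE]; ring
    -- polar decomposition
    set φ := Complex.arg x with hφdef
    have hφβ : |φ| < β / 2 := hxarg
    have hmφ : |(m:ℝ) * φ| ≤ (m:ℝ) * β / 2 := by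
      rw [abs_mul, Nat.abs_cast]
      have h1 := abs_nonneg φ
      linarith [mul_le_mul_of_nonneg_left hφβ.le hm0.le]
    have hmφ2 : |(m:ℝ) * φ| ≤ π / 2 := le_trans hmφ (by linarith)
    have hxm : x ^ m = (u:ℂ) * Complex.exp ((((m:ℝ) * φ : ℝ)) * Complex.I) := by
      conv_lhs => rw [← Complex.norm_mul_exp_arg_mul_I x]
      rw [mul_pow, ← Complex.exp_nat_mul, ← Complex.ofReal_pow, ← hsdef, ← hφdef, ← hudef]
      congr 2
      push_cast
      ring
    have hre : (x ^ m).re = u * Real.cos ((m:ℝ) * φ) := by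
      rw [hxm, Complex.re_ofReal_mul, Complex.exp_ofReal_mul_I_re]
    have him : (x ^ m).im = u * Real.sin ((m:ℝ) * φ) := by
      rw [hxm, Complex.im_ofReal_mul, Complex.exp_ofReal_mul_I_im]
    have hcosφ : 1 - η / (4 * a) ≤ Real.cos ((m:ℝ) * φ) := by
      have h1 : Real.cos ((m:ℝ) * β / 2) ≤ Real.cos |(m:ℝ) * φ| :=
        Real.cos_le_cos_of_nonneg_of_le_pi (abs_nonneg _) (by linarith) hmφ
      rw [Real.cos_abs] at h1
      linarith
    have hsc := Real.sin_sq_add_cos_sq ((m:ℝ) * φ)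
    have hεa : a * (η / (4 * a)) = η / 4 := by field_simp
    -- |1 - a x^m| ≤ 1 - (a - η/2) u
    have hA2 : (‖1 - (a:ℂ) * x ^ m‖) ^ 2 ≤ (1 - (a - η / 2) * u) ^ 2 := by
      rw [Complex.sq_norm, Complex.normSq_apply]
      have hre' : ((1:ℂ) - (a:ℂ) * x ^ m).re = 1 - a * (x ^ m).re := by
        simp [Complex.sub_re, Complex.re_ofReal_mul]
      have him' : ((1:ℂ) - (a:ℂ) * x ^ m).im = -(a * (x ^ m).im) := by
        simp [Complex.sub_im, Complex.im_ofReal_mul]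
      rw [hre', him', hre, him]
      have hcc : 2 * a * u * (1 - η / (4 * a)) ≤ 2 * a * u * Real.cos ((m:ℝ) * φ) :=
        mul_le_mul_of_nonneg_left hcosφ (by positivity)
      have hL : (1 - a * (u * Real.cos ((m:ℝ) * φ))) * (1 - a * (u * Real.cos ((m:ℝ) * φ)))
            + -(a * (u * Real.sin ((m:ℝ) * φ))) * -(a * (u * Real.sin ((m:ℝ) * φ)))
          = 1 - 2 * a * u * Real.cos ((m:ℝ) * φ) + a ^ 2 * u ^ 2 := by
        linear_combination (a ^ 2 * u ^ 2) * hsc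
      rw [hL]
      have hcc2 : 2 * a * u * (1 - η / (4 * a)) = 2 * a * u - η * u / 2 := by
        field_simp
        ring
      linarith [hcc, hcc2, mul_le_mul_of_nonneg_left hau (mul_nonneg hη0.le hu0.le),
        mul_nonneg (mul_nonneg hη0.le hη0.le) (mul_nonneg hu0.le hu0.le),
        mul_pos hη0 hu0]
    have hrhs0 : 0 ≤ 1 - (a - η / 2) * u := by linarith [hau, mul_nonneg hη0.le hu0.le]
    have hA : ‖1 - (a:ℂ) * x ^ m‖ ≤ 1 - (a - η / 2) * u := by
      calc ‖1 - (a:ℂ) * x ^ m‖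
          = Real.sqrt ((‖1 - (a:ℂ) * x ^ m‖) ^ 2) :=
            (Real.sqrt_sq (norm_nonneg _)).symm
        _ ≤ Real.sqrt ((1 - (a - η / 2) * u) ^ 2) := Real.sqrt_le_sqrt hA2
        _ = 1 - (a - η / 2) * u := Real.sqrt_sq hrhs0
    -- |w| ≤ 1 - (a - η) u
    have hwabs : ‖w‖ ≤ 1 - (a - η) * u := by
      rw [hwdef]
      calc ‖1 - (a:ℂ) * x ^ m + E‖
          ≤ ‖1 - (a:ℂ) * x ^ m‖ + ‖E‖ := norm_add_le _ _
        _ ≤ (1 - (a - η / 2) * u) + C * s * u := add_le_add hA hE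
        _ ≤ 1 - (a - η) * u := by linarith [mul_le_mul_of_nonneg_right hCs hu0.le]
    have hEre : |E.re| ≤ C * s * u := le_trans (Complex.abs_re_le_norm E) hE
    have hEim : |E.im| ≤ C * s * u := le_trans (Complex.abs_im_le_norm E) hE
    have hwre' : w.re = 1 - a * (x ^ m).re + E.re := by
      rw [hwdef]
      simp [Complex.add_re, Complex.sub_re, Complex.re_ofReal_mul]
    have hwim' : w.im = -(a * (x ^ m).im) + E.im := by
      rw [hwdef]
      simp [Complex.add_im, Complex.sub_im, Complex.im_ofReal_mul]
    have hCsu : C * s * u ≤ a * u := mul_le_mul_of_nonneg_right hCsa hu0.le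
    have hwre : 1 / 2 ≤ w.re := by
      rw [hwre', hre]
      have h1 := abs_le.mp hEre
      have h2 := Real.neg_one_le_cos ((m:ℝ) * φ)
      have h3 := Real.cos_le_one ((m:ℝ) * φ)
      linarith [h1.1, h1.2, hCsu, hau,
        mul_le_mul_of_nonneg_left h2 (mul_nonneg ha.le hu0.le),
        mul_le_mul_of_nonneg_left h3 (mul_nonneg ha.le hu0.le)]
    have hwim : |w.im| ≤ 2 * a * u := by
      rw [hwim', him]
      have h1 := abs_le.mp hEim
      have h2 := Real.neg_one_le_sin ((m:ℝ) * φ)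
      have h3 := Real.sin_le_one ((m:ℝ) * φ)
      rw [abs_le]
      constructor <;>
        linarith [h1.1, h1.2, hCsu,
          mul_le_mul_of_nonneg_left h3 (mul_nonneg ha.le hu0.le),
          mul_le_mul_of_nonneg_left h2 (mul_nonneg ha.le hu0.le)]
    have hwne : w ≠ 0 := by
      intro h; rw [h] at hwre; simp at hwre; linarith
    have hwabs2 : 1 / 2 ≤ ‖w‖ := le_trans hwre (Complex.re_le_norm w)
    have hRabs : ‖R x‖ = s * ‖w‖ := by
      rw [hxw, norm_mul, ← hsdef]
    have hRne : R x ≠ 0 := by rw [hxw]; exact mul_ne_zero hxne hwne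
    have hRpos : 0 < ‖R x‖ := norm_pos_iff.mpr hRne
    have hbound : ‖R x‖ ≤ s * (1 - (a - η) * u) := by
      rw [hRabs]; exact mul_le_mul_of_nonneg_left hwabs hs0.le
    have hRρ : ‖R x‖ < ρ := by
      apply lt_of_le_of_lt hbound
      linarith [hsρ, mul_pos (mul_pos (sub_pos.mpr hηa) hs0) hu0]
    -- argument estimates
    have hargw : |Complex.arg w| ≤ β / 8 := by
      have h0 : |Complex.arg w| ≤ π / 2 :=
        Complex.abs_arg_le_pi_div_two_iff.mpr (by linarith)
      have h1 : |Real.sin (Complex.arg w)| ≤ 4 * a * u := by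
        rw [Complex.sin_arg, abs_div, _root_.abs_of_nonneg (norm_nonneg w),
          div_le_iff₀ (by linarith : (0:ℝ) < ‖w‖)]
        linarith [hwim, mul_le_mul_of_nonneg_left hwabs2 (by positivity : (0:ℝ) ≤ 4 * a * u)]
      have h2 := Real.mul_abs_le_abs_sin (x := Complex.arg w) h0
      have h3 : 2 / π * |Complex.arg w| ≤ 4 * a * u := le_trans h2 h1
      have h4 : 2 * |Complex.arg w| ≤ 4 * a * u * π := by
        have h5 := mul_le_mul_of_nonneg_right h3 hπ.le
        calc 2 * |Complex.arg w| = 2 / π * |Complex.arg w| * π := by field_simp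
          _ ≤ 4 * a * u * π := h5
      have hπ4 : π ≤ 4 := by linarith [Real.pi_le_four]
      linarith [h4, hρβ, mul_le_mul_of_nonneg_left hπ4 (by positivity : (0:ℝ) ≤ 4 * a * u),
        mul_le_mul_of_nonneg_left huρ.le (by positivity : (0:ℝ) ≤ 16 * a),
        abs_nonneg (Complex.arg w)]
    have hφ' := abs_lt.mp hφβ
    have hw' := abs_le.mp hargw
    have hargRx : Complex.arg (R x) = φ + Complex.arg w := by
      rw [hxw]
      apply Complex.arg_mul hxne hwne
      refine Set.mem_Ioc.mpr ⟨by linarith, by linarith⟩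
    have hargfinal : |Complex.arg (R x)| < β / 2 := by
      rw [hargRx]
      rcases le_or_gt |φ| (β / 4) with hsmall | hbig
      · have h1 := abs_le.mp hsmall
        rw [abs_lt]
        constructor <;> linarith
      · rcases le_or_gt 0 φ with hφpos | hφneg
        · -- φ > β/4 : need arg w ≤ 0
          have hφ4 : β / 4 < φ := by rwa [_root_.abs_of_nonneg hφpos] at hbig
          have hmφle : (m:ℝ) * φ ≤ π / 2 := le_trans (le_abs_self _) hmφ2
          have hsinφ : Real.sin ((m:ℝ) * β / 4) ≤ Real.sin ((m:ℝ) * φ) := by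
            apply Real.sin_le_sin_of_le_of_le_pi_div_two
              (by linarith [mul_nonneg hm0.le hβ0.le]) hmφle
            linarith [mul_le_mul_of_nonneg_left hφ4.le hm0.le]
          have hwim2 : w.im ≤ 0 := by
            rw [hwim', him]
            have h1 := abs_le.mp hEim
            have hCsρ : C * s ≤ C * ρ := mul_le_mul_of_nonneg_left hsρ.le hC0.le
            linarith [h1.1, h1.2, mul_le_mul_of_nonneg_left hsinφ (mul_nonneg ha.le hu0.le),
              mul_le_mul_of_nonneg_right (hCsρ.trans hρsin) hu0.le]
          have hargw2 : Complex.arg w ≤ 0 := by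
            by_contra hpos
            push_neg at hpos
            have h1 : 0 < Real.sin (Complex.arg w) :=
              Real.sin_pos_of_pos_of_lt_pi hpos (by linarith [(abs_le.mp hargw).2])
            rw [Complex.sin_arg] at h1
            have h2 : w.im / ‖w‖ ≤ 0 :=
              div_nonpos_of_nonpos_of_nonneg hwim2 (norm_nonneg w)
            linarith
          rw [abs_lt]
          constructor <;> linarith
        · -- φ < -β/4 : need arg w ≥ 0
          have hφ4 : φ < -(β / 4) := by
            rw [_root_.abs_of_neg hφneg] at hbig; linarith
          have hmφle : -((m:ℝ) * φ) ≤ π / 2 := le_trans (neg_le_abs _) hmφ2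
          have hsinφ : Real.sin ((m:ℝ) * β / 4) ≤ Real.sin (-((m:ℝ) * φ)) := by
            apply Real.sin_le_sin_of_le_of_le_pi_div_two
              (by linarith [mul_nonneg hm0.le hβ0.le]) hmφle
            linarith [mul_le_mul_of_nonneg_left hφ4.le hm0.le]
          rw [Real.sin_neg] at hsinφ
          have hwim2 : 0 ≤ w.im := by
            rw [hwim', him]
            have h1 := abs_le.mp hEim
            have hCsρ : C * s ≤ C * ρ := mul_le_mul_of_nonneg_left hsρ.le hC0.le
            linarith [h1.1, h1.2, mul_le_mul_of_nonneg_left hsinφ (mul_nonneg ha.le hu0.le),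
              mul_le_mul_of_nonneg_right (hCsρ.trans hρsin) hu0.le]
          have hargw2 : 0 ≤ Complex.arg w := Complex.arg_nonneg_iff.mpr hwim2
          rw [abs_lt]
          constructor <;> linarith
    exact ⟨⟨hRpos, hRρ, hargfinal⟩, hbound⟩
  have hc : 0 < (a - η) * (m:ℝ) := mul_pos (by linarith) hm0
  refine ⟨β, ρ, hβ0, hρ0, hρρ₀, fun x hx => (key x hx).1, ?_⟩
  intro x hx k
  have hs0 : 0 < ‖x‖ := hx.1
  have main : ∀ j : ℕ, R^[j] x ∈ Sector β ρ ∧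
      ‖R^[j] x‖ ≤ ‖x‖ /
        (1 + (j:ℝ) * ((a - η) * (m:ℝ)) * ‖x‖ ^ m) ^ ((1:ℝ)/(m:ℝ)) := by
    intro j
    induction j with
    | zero =>
      refine ⟨by simpa using hx, ?_⟩
      simp only [Function.iterate_zero_apply, Nat.cast_zero, zero_mul, add_zero,
        Real.one_rpow, div_one]
      exact le_refl _
    | succ j ih =>
      obtain ⟨hmem, hbd⟩ := ih
      have hk := key _ hmem
      refine ⟨by rw [Function.iterate_succ_apply']; exact hk.1, ?_⟩
      rw [Function.iterate_succ_apply']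
      set t := ‖R^[j] x‖ with htdef
      have ht0 : 0 < t := hmem.1
      push_cast
      calc ‖R (R^[j] x)‖ ≤ t * (1 - (a - η) * t ^ m) := hk.2
        _ ≤ t / (1 + ((a - η) * (m:ℝ)) * t ^ m) ^ ((1:ℝ)/(m:ℝ)) := by
            have hb := aux_bern (α := 1/(m:ℝ)) (t := ((a - η) * (m:ℝ)) * t ^ m)
              (by positivity) (by rw [div_le_one hm0]; exact hm1') (by positivity)
            have heq : 1/(m:ℝ) * (((a - η) * (m:ℝ)) * t ^ m) = (a - η) * t ^ m := by
              field_simp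
            rw [heq] at hb
            have h2 := mul_le_mul_of_nonneg_left hb ht0.le
            rwa [Real.rpow_neg (by positivity), ← div_eq_mul_inv] at h2
        _ ≤ (‖x‖ / (1 + (j:ℝ) * ((a - η) * (m:ℝ)) * ‖x‖ ^ m) ^ ((1:ℝ)/(m:ℝ))) /
              (1 + ((a - η) * (m:ℝ)) * (‖x‖ /
                (1 + (j:ℝ) * ((a - η) * (m:ℝ)) * ‖x‖ ^ m) ^ ((1:ℝ)/(m:ℝ))) ^ m) ^ ((1:ℝ)/(m:ℝ)) := by
            exact aux_mono hm1 hc.le ht0.le hbd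
        _ = ‖x‖ / (1 + ((j:ℝ) + 1) * ((a - η) * (m:ℝ)) * ‖x‖ ^ m) ^ ((1:ℝ)/(m:ℝ)) :=
            aux_step hm1 hc hs0 j
  have hfin := (main k).2
  rw [← hmR]
  have hgrp : (k:ℝ) * (a - η) * (m:ℝ) = (k:ℝ) * ((a - η) * (m:ℝ)) := by ring
  rw [hgrp]
  exact hfin

end
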